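/- arXiv:2106.08678 — 2 statements merged into one kernel-verified Lean document; each statement's English description precedes it below -/
import Mathlib

section
/- Let p = (x, u) and q = (y, v) in ℝⁿ × ℝ, D = ‖x - y‖ the Euclidean distance, T = v - u. With TFD parameters α = 0, r = 0, k = 1, τ₁, τ₂ > 0, the Triple Fermi-Dirac value 𝓕(p,q) = ((1/(e^{(D²-T²)/τ₁}+1))·(1/(e^{-T/τ₂}+1))·(1/2))^{1/3} satisfies 𝓕(p,q) ≥ 1/2 if and only if e^{-T/τ₂} < 3 and D² ≤ τ₁·log((3 - e^{-T/τ₂})/(1 + e^{-T/τ₂})) + T². -/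
theorem tfd_ge_half_iff (n : ℕ) (τ₁ τ₂ : ℝ) (hτ₁ : 0 < τ₁) (hτ₂ : 0 < τ₂)
    (x y : EuclideanSpace ℝ (Fin n)) (u v : ℝ)
    (D T : ℝ) (hD : D = ‖x - y‖) (hT : T = v - u) :
    ((1 / (Real.exp ((D ^ 2 - T ^ 2) / τ₁) + 1)) *
     (1 / (Real.exp (-T / τ₂) + 1)) * (1 / 2)) ^ ((1 : ℝ) / 3) ≥ 1 / 2 ↔
    Real.exp (-T / τ₂) < 3 ∧
      D ^ 2 ≤ τ₁ * Real.log ((3 - Real.exp (-T / τ₂)) / (1 + Real.exp (-T / τ₂))) + T ^ 2 := by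
  set a := Real.exp ((D ^ 2 - T ^ 2) / τ₁) with ha'
  set b := Real.exp (-T / τ₂) with hb'
  have ha : 0 < a := Real.exp_pos _
  have hb : 0 < b := Real.exp_pos _
  have h18 : ((1:ℝ)/8) = ((1:ℝ)/2) ^ ((3:ℕ) : ℝ) := by
    rw [Real.rpow_natCast]; norm_num
  have h1 : (1 / (a + 1) * (1 / (b + 1)) * (1 / 2)) ^ ((1:ℝ)/3) ≥ 1/2 ↔
      (1:ℝ)/8 ≤ 1 / (a + 1) * (1 / (b + 1)) * (1 / 2) := by
    rw [ge_iff_le]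
    nth_rewrite 1 [show ((1:ℝ)/2) = ((1:ℝ)/8) ^ ((1:ℝ)/3) by
      rw [h18, ← Real.rpow_mul (by norm_num)]; norm_num]
    exact Real.rpow_le_rpow_iff (by norm_num) (by positivity) (by norm_num)
  have h2 : ((1:ℝ)/8 ≤ 1 / (a + 1) * (1 / (b + 1)) * (1 / 2)) ↔
      (a + 1) * (b + 1) ≤ 4 := by
    rw [div_mul_div_comm, div_mul_div_comm, one_mul, one_mul,
      div_le_div_iff₀ (by norm_num) (by positivity)]
    constructor <;> intro h <;> nlinarith
  have h3 : (a + 1) * (b + 1) ≤ 4 ↔ b < 3 ∧ a ≤ (3 - b) / (1 + b) := by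
    constructor
    · intro h
      have hb3 : b < 3 := by nlinarith
      refine ⟨hb3, ?_⟩
      rw [le_div_iff₀ (by linarith)]
      nlinarith
    · rintro ⟨hb3, h⟩
      rw [le_div_iff₀ (by linarith)] at h
      nlinarith
  have h4 : ∀ _ : b < 3, (a ≤ (3 - b) / (1 + b) ↔
      D ^ 2 ≤ τ₁ * Real.log ((3 - b) / (1 + b)) + T ^ 2) := by
    intro hb3
    have hpos : 0 < (3 - b) / (1 + b) := div_pos (by linarith) (by linarith)
    constructor
    · intro h
      have h' := Real.log_le_log (Real.exp_pos _) (ha' ▸ h)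
      rw [Real.log_exp, div_le_iff₀ hτ₁] at h'
      nlinarith
    · intro h
      have h' : (D ^ 2 - T ^ 2) / τ₁ ≤ Real.log ((3 - b) / (1 + b)) := by
        rw [div_le_iff₀ hτ₁]; nlinarith
      calc a ≤ Real.exp (Real.log ((3 - b) / (1 + b))) := Real.exp_le_exp.mpr h'
        _ = (3 - b) / (1 + b) := Real.exp_log hpos
  rw [h1, h2, h3]
  constructor
  · rintro ⟨hb3, h⟩; exact ⟨hb3, (h4 hb3).1 h⟩
  · rintro ⟨hb3, h⟩; exact ⟨hb3, (h4 hb3).2 h⟩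
end

section
/- With α = 0, r = 0, k = 1 and τ₁, τ₂ > 0, if p = (x,u), q = (y,v) ∈ ℝⁿ × ℝ satisfy the Euclidean disk inclusion condition ‖x - y‖ ≤ v - u and v - u ≥ 0, then the Triple Fermi-Dirac value 𝓕(p,q) ≥ 1/2. That is, the region of disk-inclusion is contained in the region where the TFD probability exceeds 1/2. -/
theorem disk_inclusion_subset_tfd_half (n : ℕ) (τ₁ τ₂ : ℝ) (hτ₁ : 0 < τ₁) (hτ₂ : 0 < τ₂)
    (x y : EuclideanSpace ℝ (Fin n)) (u v : ℝ)
    (D T : ℝ) (hD : D = ‖x - y‖) (hT : T = v - u)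
    (hdisk : D ≤ T) (hTnn : 0 ≤ T) :
    ((1 / (Real.exp ((D ^ 2 - T ^ 2) / τ₁) + 1)) *
     (1 / (Real.exp (-T / τ₂) + 1)) * (1 / 2)) ^ ((1 : ℝ) / 3) ≥ 1 / 2 := by
  have hDnn : 0 ≤ D := hD ▸ norm_nonneg _
  have h1 : D ^ 2 - T ^ 2 ≤ 0 := by nlinarith
  have he1 : Real.exp ((D ^ 2 - T ^ 2) / τ₁) ≤ 1 := by
    rw [Real.exp_le_one_iff]
    exact div_nonpos_of_nonpos_of_nonneg h1 hτ₁.le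
  have he2 : Real.exp (-T / τ₂) ≤ 1 := by
    rw [Real.exp_le_one_iff]
    exact div_nonpos_of_nonpos_of_nonneg (by linarith) hτ₂.le
  have hp1 : 0 < Real.exp ((D ^ 2 - T ^ 2) / τ₁) + 1 := by positivity
  have hp2 : 0 < Real.exp (-T / τ₂) + 1 := by positivity
  have hf1 : (1 : ℝ) / 2 ≤ 1 / (Real.exp ((D ^ 2 - T ^ 2) / τ₁) + 1) := by
    rw [div_le_div_iff₀ (by norm_num) hp1]; linarith
  have hf2 : (1 : ℝ) / 2 ≤ 1 / (Real.exp (-T / τ₂) + 1) := by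
    rw [div_le_div_iff₀ (by norm_num) hp2]; linarith
  have hprod : (1 : ℝ) / 8 ≤
      (1 / (Real.exp ((D ^ 2 - T ^ 2) / τ₁) + 1)) * (1 / (Real.exp (-T / τ₂) + 1)) * (1 / 2) := by
    nlinarith
  calc (1 : ℝ) / 2 = ((1 : ℝ) / 8) ^ ((1 : ℝ) / 3) := by
        rw [show (1 : ℝ) / 8 = ((1 : ℝ) / 2) ^ (3 : ℕ) by norm_num,
          ← Real.rpow_natCast ((1 : ℝ) / 2) 3, ← Real.rpow_mul (by norm_num)]
        norm_num
    _ ≤ _ := Real.rpow_le_rpow (by norm_num) hprod (by norm_num)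
end
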